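/- In a network of N nodes whose WiFi graph is a complete graph (no WiFi link is a rate bottleneck), the hotspot configuration with exactly one hotspot—the node with the largest cellular SINR—achieves the maximum possible sum rate log2(1 + max_i SINR_i) over all hotspot configurations, and this configuration is feasible, i.e., each node can be allocated a rate at least its baseline rate (1/N)·log2(1 + SINR_i). -/

import Mathlib

open Finset Real

/-- In a network of `N` nodes whose WiFi graph is a complete graph (no WiFi link
is a rate bottleneck), the configuration with exactly one hotspot — the node `m`
with the largest cellular SINR — achieves the maximum possible sum rate
`log₂(1 + SINR m)` over all hotspot configurations (a hotspot set `S` gives sum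
rate `(1/|S|) * Σ_{i∈S} log₂(1 + SINR i)`), and this configuration is feasible:
rates summing to `log₂(1 + SINR m)` can be allocated with every node getting at
least its baseline rate `(1/N) log₂(1 + SINR i)`. -/
theorem stmt0 (N : ℕ) (hN : 1 ≤ N) (SINR : Fin N → ℝ) (hpos : ∀ i, 0 < SINR i)
    (m : Fin N) (hm : ∀ i, SINR i ≤ SINR m) :
    (∀ S : Finset (Fin N), S.Nonempty →
      (1 / (S.card : ℝ)) * ∑ i ∈ S, Real.logb 2 (1 + SINR i)
        ≤ Real.logb 2 (1 + SINR m)) ∧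
    (∃ R : Fin N → ℝ,
      (∀ i, (1 / (N : ℝ)) * Real.logb 2 (1 + SINR i) ≤ R i) ∧
      ∑ i, R i = Real.logb 2 (1 + SINR m)) := by
  have hterm : ∀ i, Real.logb 2 (1 + SINR i) ≤ Real.logb 2 (1 + SINR m) := by
    intro i
    gcongr
    · norm_num
    · linarith [hpos i]
    · linarith [hm i]
  have hpart1 : ∀ S : Finset (Fin N), S.Nonempty →
      (1 / (S.card : ℝ)) * ∑ i ∈ S, Real.logb 2 (1 + SINR i)
        ≤ Real.logb 2 (1 + SINR m) := by
    intro S hS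
    have hc : (0 : ℝ) < (S.card : ℝ) := by
      exact_mod_cast Finset.card_pos.mpr hS
    rw [div_mul_eq_mul_div, one_mul, div_le_iff₀ hc]
    calc ∑ i ∈ S, Real.logb 2 (1 + SINR i)
        ≤ ∑ _i ∈ S, Real.logb 2 (1 + SINR m) :=
          Finset.sum_le_sum (fun i _ => hterm i)
      _ = Real.logb 2 (1 + SINR m) * S.card := by
          rw [Finset.sum_const, nsmul_eq_mul, mul_comm]
  refine ⟨hpart1, ?_⟩
  set L := Real.logb 2 (1 + SINR m) with hL
  set B := ∑ i, (1 / (N : ℝ)) * Real.logb 2 (1 + SINR i) with hB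
  have hNpos : (0 : ℝ) < (N : ℝ) := by exact_mod_cast hN
  have hBL : B ≤ L := by
    have := hpart1 Finset.univ (Finset.univ_nonempty_iff.mpr ⟨m⟩)
    simpa [hB, Finset.card_univ, Finset.mul_sum] using this
  refine ⟨fun i => (1 / (N : ℝ)) * Real.logb 2 (1 + SINR i) + (L - B) / N,
    fun i => ?_, ?_⟩
  · have : 0 ≤ (L - B) / N := div_nonneg (by linarith) hNpos.le
    linarith
  · rw [Finset.sum_add_distrib, Finset.sum_const, Finset.card_univ,
      Fintype.card_fin, nsmul_eq_mul, ← hB]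
    field_simp
    ring
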